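/- For every b ∈ (0,1) and every x > 0 the following two estimates hold: (i) 0 < b·φ_{1,b}(x) ≤ 4·b²·x·e^{−(1−b)x}; (ii) |(b + 1/b)·φ_{1,b}(x) − π·x·e^{−x}| ≤ b·x·e^{−(1−b)x}·( 4π/(1−b) + 4b + 4πx ). -/

import Mathlib

open MeasureTheory Real

noncomputable section

namespace DCV17

/-- `φ_{1,b}(x) = ∫_0^{2π} e^{−x·√(1+b²−2b·cos η)} cos η dη`. -/
def phi1b (b x : ℝ) : ℝ :=
  ∫ η in (0:ℝ)..(2*π), Real.exp (-x * Real.sqrt (1 + b^2 - 2*b*Real.cos η)) * Real.cos η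

/-- Auxiliary: the distance function `r(η)`. -/
def rr (b η : ℝ) : ℝ := Real.sqrt (1 + b^2 - 2*b*Real.cos η)

lemma ff_lb {b : ℝ} (hb0 : 0 < b) (η : ℝ) :
    (1-b)^2 ≤ 1 + b^2 - 2*b*Real.cos η := by
  nlinarith [Real.cos_le_one η]

lemma ff_pos {b : ℝ} (hb0 : 0 < b) (hb1 : b < 1) (η : ℝ) :
    0 < 1 + b^2 - 2*b*Real.cos η :=
  lt_of_lt_of_le (by nlinarith : (0:ℝ) < (1-b)^2) (ff_lb hb0 η)

lemma rr_pos {b : ℝ} (hb0 : 0 < b) (hb1 : b < 1) (η : ℝ) : 0 < rr b η :=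
  Real.sqrt_pos.2 (ff_pos hb0 hb1 η)

lemma rr_lb {b : ℝ} (hb0 : 0 < b) (hb1 : b < 1) (η : ℝ) : 1 - b ≤ rr b η := by
  have h : 1 - b = Real.sqrt ((1-b)^2) := by rw [Real.sqrt_sq (by linarith)]
  rw [h, rr]; exact Real.sqrt_le_sqrt (ff_lb hb0 η)

lemma rr_ub {b : ℝ} (hb0 : 0 < b) (hb1 : b < 1) (η : ℝ) : rr b η ≤ 1 + b := by
  rw [rr]
  calc Real.sqrt (1 + b^2 - 2*b*Real.cos η) ≤ Real.sqrt ((1+b)^2) :=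
        Real.sqrt_le_sqrt (by nlinarith [Real.neg_one_le_cos η])
    _ = 1 + b := Real.sqrt_sq (by linarith)

lemma abs_sin_le_rr {b : ℝ} (hb0 : 0 < b) (hb1 : b < 1) (η : ℝ) :
    |Real.sin η| ≤ rr b η := by
  have h : (Real.sin η)^2 ≤ 1 + b^2 - 2*b*Real.cos η := by
    nlinarith [Real.sin_sq_add_cos_sq η, sq_nonneg (Real.cos η - b)]
  calc |Real.sin η| = Real.sqrt ((Real.sin η)^2) := (Real.sqrt_sq_eq_abs _).symm
    _ ≤ rr b η := Real.sqrt_le_sqrt h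

lemma rr_cont (b : ℝ) : Continuous (rr b) := by
  unfold rr
  exact Real.continuous_sqrt.comp
    (by continuity : Continuous fun η : ℝ => 1 + b^2 - 2*b*Real.cos η)

lemma sin_sq_div_rr_le {b : ℝ} (hb0 : 0 < b) (hb1 : b < 1) (η : ℝ) :
    Real.sin η ^ 2 / rr b η ≤ |Real.sin η| := by
  rw [div_le_iff₀ (rr_pos hb0 hb1 η)]
  nlinarith [abs_sin_le_rr hb0 hb1 η, abs_nonneg (Real.sin η), sq_abs (Real.sin η)]

/-- Mean value bound for exponentials. -/
lemma abs_exp_neg_sub {a c m : ℝ} (hma : m ≤ a) (hmc : m ≤ c) :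
    |Real.exp (-a) - Real.exp (-c)| ≤ |a - c| * Real.exp (-m) := by
  wlog h : a ≤ c generalizing a c
  · rw [abs_sub_comm, abs_sub_comm a c]; exact this hmc hma (le_of_not_ge h)
  have h1 : Real.exp (-c) ≤ Real.exp (-a) := Real.exp_le_exp.2 (by linarith)
  rw [abs_of_nonneg (by linarith), abs_of_nonpos (by linarith)]
  have h2 : Real.exp (-a) - Real.exp (-c) = Real.exp (-a) * (1 - Real.exp (a - c)) := by
    rw [mul_sub, mul_one, ← Real.exp_add]; ring_nf
  have h3 : 1 - Real.exp (a-c) ≤ c - a := by nlinarith [Real.add_one_le_exp (a-c)]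
  have h4 : Real.exp (-a) ≤ Real.exp (-m) := Real.exp_le_exp.2 (by linarith)
  have h5 : (0:ℝ) ≤ 1 - Real.exp (a-c) := by
    have := Real.exp_le_one_iff.2 (by linarith : a - c ≤ 0); linarith
  rw [h2]
  calc Real.exp (-a) * (1 - Real.exp (a-c)) ≤ Real.exp (-m) * (c - a) :=
        mul_le_mul h4 h3 h5 (Real.exp_pos _).le
    _ = -(a-c) * Real.exp (-m) := by ring

lemma integral_abs_sin : ∫ η in (0:ℝ)..(2*π), |Real.sin η| = 4 := by
  have hπ := Real.pi_pos
  have h1 : ∫ η in (0:ℝ)..π, |Real.sin η| = 2 := by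
    rw [intervalIntegral.integral_congr (g := Real.sin) ?_]
    · rw [integral_sin]; norm_num
    · intro η hη
      rw [Set.uIcc_of_le (by linarith)] at hη
      exact abs_of_nonneg (Real.sin_nonneg_of_mem_Icc ⟨hη.1, hη.2⟩)
  have h2 : ∫ η in (π:ℝ)..(2*π), |Real.sin η| = 2 := by
    rw [intervalIntegral.integral_congr (g := fun η => -Real.sin η) ?_]
    · rw [intervalIntegral.integral_neg, integral_sin]
      norm_num [Real.cos_two_pi, Real.cos_pi]
    · intro η hη
      rw [Set.uIcc_of_le (by linarith)] at hη
      have hs : Real.sin η ≤ 0 := by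
        have h := Real.sin_nonneg_of_mem_Icc (x := η - π) ⟨by linarith [hη.1], by linarith [hη.2]⟩
        rw [Real.sin_sub_pi] at h; linarith
      simpa using abs_of_nonpos hs
  have := intervalIntegral.integral_add_adjacent_intervals
    (a := (0:ℝ)) (b := π) (c := 2*π) (f := fun η => |Real.sin η|) (μ := volume)
    ((Real.continuous_sin.abs).intervalIntegrable _ _)
    ((Real.continuous_sin.abs).intervalIntegrable _ _)
  rw [h1, h2] at this
  linarith

lemma integral_sin_sq_two_pi : ∫ η in (0:ℝ)..(2*π), Real.sin η ^ 2 = π := by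
  rw [integral_sin_sq, Real.sin_two_pi, Real.sin_zero]
  ring

/-- Key identity via integration by parts. -/
lemma phi1b_eq {b : ℝ} (hb0 : 0 < b) (hb1 : b < 1) (x : ℝ) :
    phi1b b x = ∫ η in (0:ℝ)..(2*π),
      x * b * Real.sin η ^ 2 / rr b η * Real.exp (-x * rr b η) := by
  have hcont_u' : Continuous fun η => -(x * b * Real.sin η / rr b η) * Real.exp (-x * rr b η) := by
    apply Continuous.mul
    · apply Continuous.neg
      exact ((continuous_const.mul Real.continuous_sin).div (rr_cont b)
        fun η => (rr_pos hb0 hb1 η).ne')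
    · exact Real.continuous_exp.comp (continuous_const.mul (rr_cont b))
  have hu : ∀ η ∈ Set.uIcc (0:ℝ) (2*π),
      HasDerivAt (fun η => Real.exp (-x * rr b η))
        (-(x * b * Real.sin η / rr b η) * Real.exp (-x * rr b η)) η := by
    intro η _
    have h1 : HasDerivAt (fun η : ℝ => 1 + b^2 - 2*b*Real.cos η) (2*b*Real.sin η) η := by
      have := ((Real.hasDerivAt_cos η).const_mul (2*b)).const_sub (1 + b^2)
      exact this.congr_deriv (by ring)
    have h2 := h1.sqrt (ff_pos hb0 hb1 η).ne'
    have h3 := (h2.const_mul (-x)).exp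
    refine h3.congr_deriv ?_
    have hr := (rr_pos hb0 hb1 η).ne'
    have key : ∀ R s e : ℝ, R ≠ 0 →
        -(x*b*s/R)*e = e * (-x*(2*b*s/(2*R))) := by
      intro R s e hR; field_simp
    exact (key (rr b η) (Real.sin η) (Real.exp (-x * rr b η)) hr).symm
  have hibp := intervalIntegral.integral_mul_deriv_eq_deriv_mul hu
    (fun η _ => Real.hasDerivAt_sin η)
    (hcont_u'.intervalIntegrable _ _)
    (Real.continuous_cos.intervalIntegrable _ _)
  have hphi : phi1b b x
      = ∫ η in (0:ℝ)..(2*π), Real.exp (-x * rr b η) * Real.cos η := rfl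
  rw [hphi, hibp]
  simp only [Real.sin_two_pi, Real.sin_zero, mul_zero, sub_zero, zero_sub]
  rw [← intervalIntegral.integral_neg]
  apply intervalIntegral.integral_congr
  intro η _
  ring

set_option maxHeartbeats 1000000 in
/-- For every `b ∈ (0,1)` and `x > 0`:
(i) `0 < b·φ_{1,b}(x) ≤ 4b²x·e^{−(1−b)x}`;
(ii) `|(b+1/b)·φ_{1,b}(x) − πx·e^{−x}| ≤ bx·e^{−(1−b)x}·(4π/(1−b)+4b+4πx)`. -/
theorem phi1b_estimates (b : ℝ) (hb : b ∈ Set.Ioo (0:ℝ) 1) (x : ℝ) (hx : 0 < x) :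
    (0 < b * phi1b b x ∧ b * phi1b b x ≤ 4*b^2*x*Real.exp (-(1-b)*x)) ∧
    |(b + 1/b) * phi1b b x - π*x*Real.exp (-x)|
      ≤ b*x*Real.exp (-(1-b)*x) * (4*π/(1-b) + 4*b + 4*π*x) := by
  obtain ⟨hb0, hb1⟩ := hb
  have hπ := Real.pi_pos
  set E := Real.exp (-(1-b)*x) with hE_def
  have hEpos : 0 < E := Real.exp_pos _
  set g : ℝ → ℝ := fun η => x * b * Real.sin η ^ 2 / rr b η * Real.exp (-x * rr b η) with hg_def
  have hg_cont : Continuous g := by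
    apply Continuous.mul
    · exact (by continuity : Continuous fun η : ℝ => x * b * Real.sin η ^ 2).div (rr_cont b)
        fun η => (rr_pos hb0 hb1 η).ne'
    · exact Real.continuous_exp.comp (continuous_const.mul (rr_cont b))
  have hg_int : ∀ a c : ℝ, IntervalIntegrable g volume a c :=
    fun a c => hg_cont.intervalIntegrable a c
  have hg_nonneg : ∀ η, 0 ≤ g η := by
    intro η
    apply mul_nonneg
    · exact div_nonneg (by positivity) (rr_pos hb0 hb1 η).le
    · exact (Real.exp_pos _).le
  have hexp_le : ∀ η, Real.exp (-x * rr b η) ≤ E := by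
    intro η
    rw [hE_def]
    apply Real.exp_le_exp.2
    nlinarith [rr_lb hb0 hb1 η]
  have hkey : phi1b b x = ∫ η in (0:ℝ)..(2*π), g η := phi1b_eq hb0 hb1 x
  -- positivity
  have hpos : 0 < phi1b b x := by
    rw [hkey]
    have h1 : 0 < ∫ η in (0:ℝ)..(π/2), g η := by
      apply intervalIntegral.intervalIntegral_pos_of_pos_on (hg_int 0 (π/2)) ?_ (by linarith)
      intro η hη
      have hs : 0 < Real.sin η := Real.sin_pos_of_pos_of_lt_pi hη.1 (by linarith [hη.2])
      apply mul_pos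
      · exact div_pos (by positivity) (rr_pos hb0 hb1 η)
      · exact Real.exp_pos _
    have h2 : 0 ≤ ∫ η in (π/2:ℝ)..(2*π), g η :=
      intervalIntegral.integral_nonneg (by linarith) (fun η _ => hg_nonneg η)
    have h3 := intervalIntegral.integral_add_adjacent_intervals
      (hg_int 0 (π/2)) (hg_int (π/2) (2*π))
    linarith [h3.symm ▸ (by linarith : 0 < (∫ η in (0:ℝ)..(π/2), g η) + ∫ η in (π/2:ℝ)..(2*π), g η)]
  -- upper bound (i)
  have hub : phi1b b x ≤ 4 * b * x * E := by
    rw [hkey]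
    have hmono : (∫ η in (0:ℝ)..(2*π), g η)
        ≤ ∫ η in (0:ℝ)..(2*π), (x * b * E) * |Real.sin η| := by
      apply intervalIntegral.integral_mono_on (by linarith) (hg_int 0 (2*π))
        ((continuous_const.mul Real.continuous_sin.abs).intervalIntegrable _ _)
      intro η _
      have h1 : x * b * Real.sin η ^ 2 / rr b η ≤ x * b * |Real.sin η| := by
        rw [mul_div_assoc]
        exact mul_le_mul_of_nonneg_left (sin_sq_div_rr_le hb0 hb1 η) (by positivity)
      calc g η ≤ (x * b * |Real.sin η|) * E := by
            apply mul_le_mul h1 (hexp_le η) (Real.exp_pos _).le (by positivity)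
        _ = (x * b * E) * |Real.sin η| := by ring
    rw [intervalIntegral.integral_const_mul, integral_abs_sin] at hmono
    linarith
  constructor
  · exact ⟨by positivity, by nlinarith [mul_le_mul_of_nonneg_left hub hb0.le]⟩
  -- part (ii)
  have hb_ne : b ≠ 0 := hb0.ne'
  set F1 : ℝ → ℝ := fun η => (1+b^2) * x * (Real.sin η ^ 2 / rr b η) * Real.exp (-x * rr b η)
    with hF1_def
  set F2 : ℝ → ℝ := fun η => x * Real.sin η ^ 2 * Real.exp (-x) with hF2_def
  have hF1_cont : Continuous F1 := by
    apply Continuous.mul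
    · exact continuous_const.mul ((by continuity : Continuous fun η : ℝ => Real.sin η ^ 2).div
        (rr_cont b) fun η => (rr_pos hb0 hb1 η).ne')
    · exact Real.continuous_exp.comp (continuous_const.mul (rr_cont b))
  have hF2_cont : Continuous F2 := by continuity
  have h1 : (b + 1/b) * phi1b b x = ∫ η in (0:ℝ)..(2*π), F1 η := by
    rw [hkey, ← intervalIntegral.integral_const_mul]
    apply intervalIntegral.integral_congr
    intro η _
    have hbb : (b + 1/b) * b = 1 + b^2 := by field_simp; ring
    simp only [hg_def, hF1_def]
    linear_combination (x * Real.sin η ^ 2 / rr b η * Real.exp (-x * rr b η)) * hbb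
  have h2 : π * x * Real.exp (-x) = ∫ η in (0:ℝ)..(2*π), F2 η := by
    have : (fun η => F2 η) = fun η => (x * Real.exp (-x)) * Real.sin η ^ 2 := by
      funext η; simp only [hF2_def]; ring
    rw [this, intervalIntegral.integral_const_mul, integral_sin_sq_two_pi]
    ring
  have hD : (b + 1/b) * phi1b b x - π*x*Real.exp (-x)
      = ∫ η in (0:ℝ)..(2*π), (F1 η - F2 η) := by
    rw [h1, h2, intervalIntegral.integral_sub (hF1_cont.intervalIntegrable _ _)
      (hF2_cont.intervalIntegrable _ _)]
  -- pointwise bound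
  have hpt : ∀ η ∈ Set.Icc (0:ℝ) (2*π),
      |F1 η - F2 η| ≤ (2*x*b*E) * |Real.sin η| + (x^2*b*E) * Real.sin η ^ 2 := by
    intro η _
    have hr := rr_pos hb0 hb1 η
    have hsplit : F1 η - F2 η
        = Real.exp (-x * rr b η) * (Real.sin η ^ 2 / rr b η) * x * ((1+b^2) - rr b η)
          + x * Real.sin η ^ 2 * (Real.exp (-x * rr b η) - Real.exp (-x)) := by
      have h : Real.sin η ^ 2 / rr b η * rr b η = Real.sin η ^ 2 :=
        div_mul_cancel₀ _ hr.ne'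
      simp only [hF1_def, hF2_def]
      linear_combination x * Real.exp (-x * rr b η) * h
    have habs1 : |(1+b^2) - rr b η| ≤ b + b^2 := by
      rw [abs_le]
      constructor
      · nlinarith [rr_ub hb0 hb1 η]
      · nlinarith [rr_lb hb0 hb1 η]
    have hterm1 : |Real.exp (-x * rr b η) * (Real.sin η ^ 2 / rr b η) * x * ((1+b^2) - rr b η)|
        ≤ (2*x*b*E) * |Real.sin η| := by
      rw [abs_mul, abs_mul, abs_mul]
      rw [abs_of_nonneg (Real.exp_pos _).le, abs_of_nonneg (div_nonneg (by positivity) hr.le),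
        abs_of_nonneg hx.le]
      calc Real.exp (-x * rr b η) * (Real.sin η ^ 2 / rr b η) * x * |(1+b^2) - rr b η|
          ≤ E * |Real.sin η| * x * (b + b^2) := by
            apply mul_le_mul ?_ habs1 (abs_nonneg _) (by positivity)
            apply mul_le_mul_of_nonneg_right ?_ hx.le
            exact mul_le_mul (hexp_le η) (sin_sq_div_rr_le hb0 hb1 η)
              (div_nonneg (by positivity) hr.le) hEpos.le
        _ ≤ (2*x*b*E) * |Real.sin η| := by
            nlinarith [mul_nonneg (by positivity : (0:ℝ) ≤ E * |Real.sin η| * x)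
              (by nlinarith : (0:ℝ) ≤ b - b^2)]
    have hterm2 : |x * Real.sin η ^ 2 * (Real.exp (-x * rr b η) - Real.exp (-x))|
        ≤ (x^2*b*E) * Real.sin η ^ 2 := by
      rw [abs_mul, abs_of_nonneg (by positivity : (0:ℝ) ≤ x * Real.sin η ^ 2)]
      have hmv : |Real.exp (-x * rr b η) - Real.exp (-x)| ≤ |x * rr b η - x| * E := by
        have h0 := abs_exp_neg_sub (a := x * rr b η) (c := x) (m := (1-b)*x)
          (by nlinarith [rr_lb hb0 hb1 η]) (by nlinarith)
        rw [hE_def, neg_mul, neg_mul]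
        exact h0
      have habs2 : |x * rr b η - x| ≤ x * b := by
        rw [abs_le]
        constructor
        · nlinarith [rr_lb hb0 hb1 η]
        · nlinarith [rr_ub hb0 hb1 η]
      have h5 : |Real.exp (-x * rr b η) - Real.exp (-x)| ≤ x * b * E :=
        hmv.trans (mul_le_mul_of_nonneg_right habs2 hEpos.le)
      calc x * Real.sin η ^ 2 * |Real.exp (-x * rr b η) - Real.exp (-x)|
          ≤ x * Real.sin η ^ 2 * (x * b * E) := by
            exact mul_le_mul_of_nonneg_left h5 (by positivity)
        _ = (x^2*b*E) * Real.sin η ^ 2 := by ring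
    calc |F1 η - F2 η| ≤ |Real.exp (-x * rr b η) * (Real.sin η ^ 2 / rr b η) * x * ((1+b^2) - rr b η)|
          + |x * Real.sin η ^ 2 * (Real.exp (-x * rr b η) - Real.exp (-x))| := by
          rw [hsplit]; exact abs_add_le _ _
      _ ≤ (2*x*b*E) * |Real.sin η| + (x^2*b*E) * Real.sin η ^ 2 := add_le_add hterm1 hterm2
  have hbound_int : (∫ η in (0:ℝ)..(2*π), |F1 η - F2 η|)
      ≤ ∫ η in (0:ℝ)..(2*π), ((2*x*b*E) * |Real.sin η| + (x^2*b*E) * Real.sin η ^ 2) := by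
    apply intervalIntegral.integral_mono_on (by linarith)
      ((hF1_cont.sub hF2_cont).abs.intervalIntegrable _ _)
      ((by continuity : Continuous fun η : ℝ =>
        (2*x*b*E) * |Real.sin η| + (x^2*b*E) * Real.sin η ^ 2).intervalIntegrable _ _)
      hpt
  have hval : (∫ η in (0:ℝ)..(2*π), ((2*x*b*E) * |Real.sin η| + (x^2*b*E) * Real.sin η ^ 2))
      = (2*x*b*E) * 4 + (x^2*b*E) * π := by
    rw [intervalIntegral.integral_add
      ((by continuity : Continuous fun η : ℝ => (2*x*b*E) * |Real.sin η|).intervalIntegrable _ _)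
      ((by continuity : Continuous fun η : ℝ => (x^2*b*E) * Real.sin η ^ 2).intervalIntegrable _ _),
      intervalIntegral.integral_const_mul, intervalIntegral.integral_const_mul,
      integral_abs_sin, integral_sin_sq_two_pi]
  have hDabs : |(b + 1/b) * phi1b b x - π*x*Real.exp (-x)| ≤ b*x*E*(8 + π*x) := by
    rw [hD]
    calc |∫ η in (0:ℝ)..(2*π), (F1 η - F2 η)| ≤ ∫ η in (0:ℝ)..(2*π), |F1 η - F2 η| :=
          intervalIntegral.abs_integral_le_integral_abs (by linarith)
      _ ≤ (2*x*b*E) * 4 + (x^2*b*E) * π := by rw [← hval]; exact hbound_int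
      _ = b*x*E*(8 + π*x) := by ring
  have h8 : (8:ℝ) ≤ 4*π/(1-b) := by
    rw [le_div_iff₀ (by linarith)]
    nlinarith [Real.pi_gt_three]
  have hcoef : 8 + π*x ≤ 4*π/(1-b) + 4*b + 4*π*x := by nlinarith
  calc |(b + 1/b) * phi1b b x - π*x*Real.exp (-x)| ≤ b*x*E*(8 + π*x) := hDabs
    _ ≤ b*x*E * (4*π/(1-b) + 4*b + 4*π*x) :=
        mul_le_mul_of_nonneg_left hcoef (by positivity)

end DCV17
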